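/- Let (X,d) be a metric space and q ≥ 1. Define D : (X × [0,∞)) × (X × [0,∞)) → [0,∞) by D((x,r),(y,s)) = ( r + s − min(r,s)·max(2 − d(x,y)^q, 0) )^{1/q}. Then D is symmetric, satisfies the triangle inequality D((x,r),(z,t)) ≤ D((x,r),(y,s)) + D((y,s),(z,t)) for all (x,r), (y,s), (z,t) ∈ X × [0,∞), and D((x,r),(y,s)) = 0 if and only if (r = s = 0) or (x = y and r = s). Consequently D descends to a distance on the cone Co[X] = (X × [0,∞)) / (X × {0}). -/

import Mathlib

open MeasureTheory ENNReal NNReal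

noncomputable section

private lemma tv_rpow_superadd {q x y : ℝ} (hq : 1 ≤ q) (hx : 0 ≤ x) (hy : 0 ≤ y) :
    x ^ q + y ^ q ≤ (x + y) ^ q := by
  have h := NNReal.coe_le_coe.2 (NNReal.add_rpow_le_rpow_add (⟨x, hx⟩ : ℝ≥0) ⟨y, hy⟩ hq)
  exact h

private lemma tv_mink3 {q u1 u2 u3 v1 v2 v3 : ℝ} (hq : 1 ≤ q)
    (hu1 : 0 ≤ u1) (hu2 : 0 ≤ u2) (hu3 : 0 ≤ u3)
    (hv1 : 0 ≤ v1) (hv2 : 0 ≤ v2) (hv3 : 0 ≤ v3) :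
    ((u1 + v1) ^ q + (u2 + v2) ^ q + (u3 + v3) ^ q) ^ (1 / q)
      ≤ (u1 ^ q + u2 ^ q + u3 ^ q) ^ (1 / q) + (v1 ^ q + v2 ^ q + v3 ^ q) ^ (1 / q) := by
  have h := Real.Lp_add_le_of_nonneg (s := (Finset.univ : Finset (Fin 3)))
    (f := ![u1, u2, u3]) (g := ![v1, v2, v3]) (p := q) hq
    (by intro i _; fin_cases i <;> simpa) (by intro i _; fin_cases i <;> simpa)
  simpa [Fin.sum_univ_three, add_assoc] using h

private lemma tv_core2 {q r s t A B C : ℝ} (hq : 1 ≤ q)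
    (hr : 0 ≤ r) (hs : 0 ≤ s) (ht : 0 ≤ t)
    (hA0 : 0 ≤ A) (hB0 : 0 ≤ B) (hC0 : 0 ≤ C)
    (hCq2 : C ^ q ≤ 2) (hCAB : C ≤ A + B) :
    (|r - t| + min r t * C ^ q) ^ q⁻¹
      ≤ (|r - s| + min r s * A ^ q) ^ q⁻¹ + (|s - t| + min s t * B ^ q) ^ q⁻¹ := by
  have hq0 : (0 : ℝ) < q := lt_of_lt_of_le one_pos hq
  have hqne : q ≠ 0 := hq0.ne'
  have key : ∀ w : ℝ, 0 ≤ w → w * C ^ q ≤ w * (A + B) ^ q := fun w hw =>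
    mul_le_mul_of_nonneg_left (Real.rpow_le_rpow hC0 hCAB hq0.le) hw
  have hpow : ∀ x : ℝ, 0 ≤ x → (x ^ q⁻¹) ^ q = x := fun x hx => Real.rpow_inv_rpow hx hqne
  have hmul : ∀ w x : ℝ, 0 ≤ w → 0 ≤ x → (w ^ q⁻¹ * x) ^ q = w * x ^ q := by
    intro w x hw hx
    rw [Real.mul_rpow (Real.rpow_nonneg hw _) hx, hpow w hw]
  rcases le_or_gt (min r t) s with hcase | hcase
  · -- s ≥ min r t ; w = min r t
    have hw0 : (0:ℝ) ≤ min r t := le_min hr ht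
    have hwr : min r t ≤ min r s := le_min (min_le_left _ _) hcase
    have hwt : min r t ≤ min s t := le_min hcase (min_le_right _ _)
    have step1 : (|r - t| + min r t * C ^ q) ^ q⁻¹
        ≤ ((|r - s| ^ q⁻¹ + |s - t| ^ q⁻¹) ^ q
            + ((min r t) ^ q⁻¹ * A + (min r t) ^ q⁻¹ * B) ^ q) ^ q⁻¹ := by
      apply Real.rpow_le_rpow (by positivity) ?_ (by positivity)
      have h1 : |r - t| ≤ (|r - s| ^ q⁻¹ + |s - t| ^ q⁻¹) ^ q := by
        calc |r - t| ≤ |r - s| + |s - t| := abs_sub_le _ _ _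
          _ = (|r - s| ^ q⁻¹) ^ q + (|s - t| ^ q⁻¹) ^ q := by
              rw [hpow _ (abs_nonneg _), hpow _ (abs_nonneg _)]
          _ ≤ _ := tv_rpow_superadd hq (by positivity) (by positivity)
      have h2 : min r t * C ^ q ≤ ((min r t) ^ q⁻¹ * A + (min r t) ^ q⁻¹ * B) ^ q := by
        rw [← mul_add, hmul _ _ hw0 (by positivity)]
        exact key _ hw0
      linarith
    have step2 := tv_mink3 (q := q) hq (Real.rpow_nonneg (abs_nonneg (r - s)) q⁻¹)
      le_rfl (by positivity : (0:ℝ) ≤ (min r t) ^ q⁻¹ * A)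
      (Real.rpow_nonneg (abs_nonneg (s - t)) q⁻¹) le_rfl
      (by positivity : (0:ℝ) ≤ (min r t) ^ q⁻¹ * B)
    rw [one_div] at step2
    simp only [add_zero, zero_add, Real.zero_rpow hqne] at step2
    refine step1.trans (step2.trans ?_)
    have e1 : (|r - s| ^ q⁻¹) ^ q + ((min r t) ^ q⁻¹ * A) ^ q
        = |r - s| + min r t * A ^ q := by
      rw [hpow _ (abs_nonneg _), hmul _ _ hw0 hA0]
    have e2 : (|s - t| ^ q⁻¹) ^ q + ((min r t) ^ q⁻¹ * B) ^ q
        = |s - t| + min r t * B ^ q := by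
      rw [hpow _ (abs_nonneg _), hmul _ _ hw0 hB0]
    rw [e1, e2]
    have m1 : min r t * A ^ q ≤ min r s * A ^ q :=
      mul_le_mul_of_nonneg_right hwr (by positivity)
    have m2 : min r t * B ^ q ≤ min s t * B ^ q :=
      mul_le_mul_of_nonneg_right hwt (by positivity)
    exact add_le_add
      (Real.rpow_le_rpow (by positivity) (by linarith) (by positivity))
      (Real.rpow_le_rpow (by positivity) (by linarith) (by positivity))
  · -- s < min r t
    have hsr : s ≤ r := le_of_lt (lt_of_lt_of_le hcase (min_le_left _ _))
    have hst : s ≤ t := le_of_lt (lt_of_lt_of_le hcase (min_le_right _ _))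
    have hrs0 : (0:ℝ) ≤ r - s := by linarith
    have hts0 : (0:ℝ) ≤ t - s := by linarith
    have step1 : (|r - t| + min r t * C ^ q) ^ q⁻¹
        ≤ (((r - s) ^ q⁻¹) ^ q + ((t - s) ^ q⁻¹) ^ q
            + (s ^ q⁻¹ * A + s ^ q⁻¹ * B) ^ q) ^ q⁻¹ := by
      apply Real.rpow_le_rpow (by positivity) ?_ (by positivity)
      have h1 : min r t * C ^ q ≤ s * C ^ q + (min r t - s) * 2 := by
        have he : min r t * C ^ q = s * C ^ q + (min r t - s) * C ^ q := by ring
        rw [he]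
        have := mul_le_mul_of_nonneg_left hCq2 (by linarith [hcase.le] : (0:ℝ) ≤ min r t - s)
        linarith
      have h2 : |r - t| + (min r t - s) * 2 = (r - s) + (t - s) := by
        rcases le_total r t with h | h
        · rw [abs_of_nonpos (by linarith), min_eq_left h]; ring
        · rw [abs_of_nonneg (by linarith), min_eq_right h]; ring
      have h3 : s * C ^ q ≤ (s ^ q⁻¹ * A + s ^ q⁻¹ * B) ^ q := by
        rw [← mul_add, hmul _ _ hs (by positivity)]
        exact key s hs
      rw [hpow _ hrs0, hpow _ hts0]
      linarith
    have step2 := tv_mink3 (q := q) hq (Real.rpow_nonneg hrs0 q⁻¹)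
      le_rfl (by positivity : (0:ℝ) ≤ s ^ q⁻¹ * A)
      le_rfl (Real.rpow_nonneg hts0 q⁻¹) (by positivity : (0:ℝ) ≤ s ^ q⁻¹ * B)
    rw [one_div] at step2
    simp only [add_zero, zero_add, Real.zero_rpow hqne] at step2
    refine step1.trans (step2.trans ?_)
    have e1 : ((r - s) ^ q⁻¹) ^ q + (s ^ q⁻¹ * A) ^ q
        = |r - s| + min r s * A ^ q := by
      rw [hpow _ hrs0, hmul _ _ hs hA0,
        abs_of_nonneg (by linarith), min_eq_right hsr]
    have e2 : ((t - s) ^ q⁻¹) ^ q + (s ^ q⁻¹ * B) ^ q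
        = |s - t| + min s t * B ^ q := by
      rw [hpow _ hts0, hmul _ _ hs hB0,
        abs_of_nonpos (by linarith), min_eq_left hst, neg_sub]
    rw [e1, e2]

private lemma tv_core {q r s t α β γ : ℝ} (hq : 1 ≤ q)
    (hr : 0 ≤ r) (hs : 0 ≤ s) (ht : 0 ≤ t)
    (hα : 0 ≤ α) (hβ : 0 ≤ β) (hγ : 0 ≤ γ) (htri : γ ≤ α + β) :
    (|r - t| + min r t * min (γ ^ q) 2) ^ (1 / q)
      ≤ (|r - s| + min r s * min (α ^ q) 2) ^ (1 / q)
        + (|s - t| + min s t * min (β ^ q) 2) ^ (1 / q) := by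
  have hq0 : (0 : ℝ) < q := lt_of_lt_of_le one_pos hq
  have hqne : q ≠ 0 := hq0.ne'
  simp only [one_div]
  have hM0 : (0:ℝ) ≤ (2:ℝ) ^ q⁻¹ := Real.rpow_nonneg (by norm_num) _
  have hMq : ((2:ℝ) ^ q⁻¹) ^ q = 2 := Real.rpow_inv_rpow (by norm_num) hqne
  have hmin : ∀ a : ℝ, 0 ≤ a → min (a ^ q) 2 = (min a ((2:ℝ) ^ q⁻¹)) ^ q := by
    intro a ha
    rcases le_total a ((2:ℝ) ^ q⁻¹) with h | h
    · rw [min_eq_left h, min_eq_left]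
      calc a ^ q ≤ ((2:ℝ) ^ q⁻¹) ^ q := Real.rpow_le_rpow ha h hq0.le
        _ = 2 := hMq
    · rw [min_eq_right h, min_eq_right, hMq]
      calc (2 : ℝ) = ((2:ℝ) ^ q⁻¹) ^ q := hMq.symm
        _ ≤ a ^ q := Real.rpow_le_rpow hM0 h hq0.le
  rw [hmin _ hα, hmin _ hβ, hmin _ hγ]
  have hA0 : (0:ℝ) ≤ min α ((2:ℝ) ^ q⁻¹) := le_min hα hM0
  have hB0 : (0:ℝ) ≤ min β ((2:ℝ) ^ q⁻¹) := le_min hβ hM0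
  have hC0 : (0:ℝ) ≤ min γ ((2:ℝ) ^ q⁻¹) := le_min hγ hM0
  have hCq2 : (min γ ((2:ℝ) ^ q⁻¹)) ^ q ≤ 2 := by
    calc (min γ ((2:ℝ) ^ q⁻¹)) ^ q ≤ ((2:ℝ) ^ q⁻¹) ^ q :=
          Real.rpow_le_rpow hC0 (min_le_right _ _) hq0.le
      _ = 2 := hMq
  have hCAB : min γ ((2:ℝ) ^ q⁻¹) ≤ min α ((2:ℝ) ^ q⁻¹) + min β ((2:ℝ) ^ q⁻¹) := by
    rcases le_total α ((2:ℝ) ^ q⁻¹) with h1 | h1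
    · rcases le_total β ((2:ℝ) ^ q⁻¹) with h2 | h2
      · calc min γ _ ≤ γ := min_le_left _ _
          _ ≤ α + β := htri
          _ = _ := by rw [min_eq_left h1, min_eq_left h2]
      · calc min γ _ ≤ (2:ℝ) ^ q⁻¹ := min_le_right _ _
          _ ≤ _ := by rw [min_eq_right h2]; exact le_add_of_nonneg_left hA0
    · calc min γ _ ≤ (2:ℝ) ^ q⁻¹ := min_le_right _ _
        _ ≤ _ := by rw [min_eq_right h1]; exact le_add_of_nonneg_right hB0
  exact tv_core2 hq hr hs ht hA0 hB0 hC0 hCq2 hCAB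


/-- The cone cost of partial optimal transport on `X × [0,∞)`:
`D((x,r),(y,s)) = (r + s − min(r,s)·max(2 − d(x,y)^q, 0))^{1/q}`. -/
def tvConeDist {X : Type*} [MetricSpace X] (q : ℝ) (a b : X × ℝ≥0) : ℝ :=
  ((a.2 : ℝ) + (b.2 : ℝ)
      - min (a.2 : ℝ) (b.2 : ℝ) * max (2 - dist a.1 b.1 ^ q) 0) ^ (1 / q)

private lemma tv_rw {X : Type*} [MetricSpace X] (q : ℝ) (a b : X × ℝ≥0) :
    tvConeDist q a b
      = (|(a.2 : ℝ) - (b.2 : ℝ)|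
          + min (a.2 : ℝ) (b.2 : ℝ) * min (dist a.1 b.1 ^ q) 2) ^ (1 / q) := by
  unfold tvConeDist
  congr 1
  have h1 : max (2 - dist a.1 b.1 ^ q) 0 = 2 - min (dist a.1 b.1 ^ q) 2 := by
    rcases le_total (dist a.1 b.1 ^ q) 2 with h | h
    · rw [min_eq_left h, max_eq_left (by linarith)]
    · rw [min_eq_right h, max_eq_right (by linarith), sub_self]
  rw [h1]
  rcases le_total ((a.2 : ℝ)) ((b.2 : ℝ)) with h | h
  · rw [abs_of_nonpos (by linarith), min_eq_left h]; ring
  · rw [abs_of_nonneg (by linarith), min_eq_right h]; ring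

/-- **Statement 19.** For `q ≥ 1`, the partial optimal transport cone cost
`D((x,r),(y,s)) = (r + s − (r∧s)·(2 − d(x,y)^q)₊)^{1/q}` is symmetric, satisfies the
triangle inequality, and vanishes exactly when `r = s = 0` or (`x = y` and `r = s`);
consequently it descends to a distance on the cone `Co[X] = (X × [0,∞))/(X × {0})`. -/
theorem tv_cone_dist_is_distance {X : Type*} [MetricSpace X] (q : ℝ) (hq : 1 ≤ q) :
    (∀ a b : X × ℝ≥0, tvConeDist q a b = tvConeDist q b a) ∧
    (∀ a b c : X × ℝ≥0, tvConeDist q a c ≤ tvConeDist q a b + tvConeDist q b c) ∧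
    (∀ a b : X × ℝ≥0, tvConeDist q a b = 0 ↔
      (a.2 = 0 ∧ b.2 = 0) ∨ (a.1 = b.1 ∧ a.2 = b.2)) := by
  have hq0 : (0 : ℝ) < q := lt_of_lt_of_le one_pos hq
  refine ⟨?_, ?_, ?_⟩
  · intro a b
    unfold tvConeDist
    congr 1
    rw [dist_comm, min_comm]
    ring
  · intro a b c
    rw [tv_rw, tv_rw, tv_rw]
    exact tv_core hq a.2.coe_nonneg b.2.coe_nonneg c.2.coe_nonneg
      dist_nonneg dist_nonneg dist_nonneg (dist_triangle a.1 b.1 c.1)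
  · intro a b
    rw [tv_rw]
    have hbase : (0:ℝ) ≤ |(a.2 : ℝ) - (b.2 : ℝ)|
        + min (a.2 : ℝ) (b.2 : ℝ) * min (dist a.1 b.1 ^ q) 2 := by
      have := a.2.coe_nonneg
      have := b.2.coe_nonneg
      have : (0:ℝ) ≤ min (a.2 : ℝ) (b.2 : ℝ) := le_min a.2.coe_nonneg b.2.coe_nonneg
      have h2 : (0:ℝ) ≤ min (dist a.1 b.1 ^ q) 2 :=
        le_min (Real.rpow_nonneg dist_nonneg _) (by positivity)
      positivity
    rw [Real.rpow_eq_zero hbase (one_div_ne_zero hq0.ne')]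
    constructor
    · intro h
      have hmin0 : (0:ℝ) ≤ min (a.2 : ℝ) (b.2 : ℝ) := le_min a.2.coe_nonneg b.2.coe_nonneg
      have hd0 : (0:ℝ) ≤ min (dist a.1 b.1 ^ q) 2 :=
        le_min (Real.rpow_nonneg dist_nonneg _) (by positivity)
      have hprod : (0:ℝ) ≤ min (a.2 : ℝ) (b.2 : ℝ) * min (dist a.1 b.1 ^ q) 2 :=
        mul_nonneg hmin0 hd0
      have habs0 : |(a.2 : ℝ) - (b.2 : ℝ)| = 0 :=
        le_antisymm (by linarith [abs_nonneg ((a.2 : ℝ) - (b.2 : ℝ))]) (abs_nonneg _)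
      have hrs : (a.2 : ℝ) = (b.2 : ℝ) := by
        have := abs_eq_zero.mp habs0; linarith
      have hprod0 : min (a.2 : ℝ) (b.2 : ℝ) * min (dist a.1 b.1 ^ q) 2 = 0 := by
        rw [habs0, zero_add] at h; exact h
      rcases mul_eq_zero.mp hprod0 with hm | hm
      · left
        have ha0 : (a.2 : ℝ) = 0 := by
          rw [hrs, min_self] at hm; rw [hrs]; exact hm
        have hb0 : (b.2 : ℝ) = 0 := hrs ▸ ha0
        exact ⟨NNReal.coe_eq_zero.mp ha0, NNReal.coe_eq_zero.mp hb0⟩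
      · right
        have hdq : dist a.1 b.1 ^ q = 0 := by
          rcases le_total (dist a.1 b.1 ^ q) 2 with h2 | h2
          · rwa [min_eq_left h2] at hm
          · rw [min_eq_right h2] at hm; norm_num at hm
        have hd : dist a.1 b.1 = 0 := (Real.rpow_eq_zero dist_nonneg hq0.ne').mp hdq
        exact ⟨dist_eq_zero.mp hd, NNReal.coe_inj.mp hrs⟩
    · rintro (⟨h1, h2⟩ | ⟨h1, h2⟩)
      · rw [h1, h2]
        simp
      · have hd : dist a.1 b.1 = 0 := dist_eq_zero.mpr h1
        rw [h2, hd, Real.zero_rpow hq0.ne']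
        simp

end
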